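/- Fix r ∈ [1,2). Let X be a random variable and 𝕍 an upper probability with C_𝕍(|X|^r) = ∫₀^∞ 𝕍(|X|^r ≥ t) dt < ∞. Let C > 0 and let (X_j) be random variables with 𝕍(|X_j| ≥ x) ≤ C·𝕍(|X| ≥ x) for all x ≥ 0 and all j. Suppose r > 1. Then Σ_{j=1}^∞ j^{−1/r} · 𝔼[(|X_j| − j^{1/r})⁺] ≤ (2C/(r−1))·C_𝕍(|X|^r) < ∞, where 𝔼 is the upper expectation associated with 𝕍. -/

import Mathlib

open MeasureTheory Set Filter ENNReal

lemma stmt6_baux {s b x : ℝ} (hs0 : 0 ≤ s) (hs1 : s ≤ 1) (hb : 0 < b) (hx : -b ≤ x) :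
    (b + x) ^ s ≤ b ^ s + s * x * b ^ (s - 1) := by
  have hxb : -1 ≤ x / b := by
    rw [neg_le, ← neg_div, div_le_one hb]; linarith
  have h1 : b + x = b * (1 + x / b) := by field_simp
  have h2 : (0 : ℝ) ≤ 1 + x / b := by linarith
  have h3 : (b * (1 + x / b)) ^ s = b ^ s * (1 + x / b) ^ s :=
    Real.mul_rpow hb.le h2
  have h4 : (1 + x / b) ^ s ≤ 1 + s * (x / b) :=
    rpow_one_add_le_one_add_mul_self hxb hs0 hs1
  have h5 : b ^ s * (1 + s * (x / b)) = b ^ s + s * x * b ^ (s - 1) := by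
    rw [Real.rpow_sub hb, Real.rpow_one]
    field_simp
  calc (b + x) ^ s = b ^ s * (1 + x / b) ^ s := by rw [h1, h3]
    _ ≤ b ^ s * (1 + s * (x / b)) := by
        apply mul_le_mul_of_nonneg_left h4 (Real.rpow_nonneg hb.le s)
    _ = b ^ s + s * x * b ^ (s - 1) := h5

lemma stmt6_sumbound {r : ℝ} (hr1 : 1 < r) (m : ℕ) :
    ∑ j ∈ Finset.Icc 1 m, ((j : ℝ) ^ (-(1/r))) ≤ (r/(r-1)) * (m : ℝ) ^ (1 - 1/r) := by
  have hr0 : (0:ℝ) < r := by linarith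
  have hs0 : (0:ℝ) < 1 - 1/r := by
    rw [sub_pos, div_lt_one hr0]; exact hr1
  have hs1 : (1:ℝ) - 1/r ≤ 1 := by linarith [one_div_pos.mpr hr0]
  induction m with
  | zero =>
    simp only [Nat.cast_zero, Finset.Icc_self, Real.zero_rpow (ne_of_gt hs0), mul_zero]
    simp
  | succ m ih =>
    rw [Finset.sum_Icc_succ_top (Nat.one_le_iff_ne_zero.mpr (Nat.succ_ne_zero m))]
    have hb : (0:ℝ) < (m:ℝ) + 1 := by positivity
    have hber := stmt6_baux hs0.le hs1 hb (by linarith : -((m:ℝ)+1) ≤ (-1:ℝ))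
    -- hber : ((m+1) + (-1)) ^ s ≤ (m+1)^s + s*(-1)*(m+1)^(s-1)
    have hm : ((m:ℝ) + 1 + (-1)) = (m:ℝ) := by ring
    rw [hm] at hber
    have hsub : (1 - 1/r - 1 : ℝ) = -(1/r) := by ring
    rw [hsub] at hber
    have hkey : ((m:ℝ)+1) ^ (-(1/r)) ≤ (r/(r-1)) * (((m:ℝ)+1) ^ (1 - 1/r) - (m:ℝ) ^ (1 - 1/r)) := by
      have h2 : (m:ℝ) ^ (1-1/r) ≤ ((m:ℝ)+1)^(1-1/r) - (1-1/r) * ((m:ℝ)+1)^(-(1/r)) := by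
        linarith
      have h3 : (1-1/r) * ((m:ℝ)+1)^(-(1/r)) ≤ ((m:ℝ)+1)^(1-1/r) - (m:ℝ)^(1-1/r) := by
        linarith
      have h4 : (r/(r-1)) * ((1-1/r) * ((m:ℝ)+1)^(-(1/r)))
          ≤ (r/(r-1)) * (((m:ℝ)+1)^(1-1/r) - (m:ℝ)^(1-1/r)) := by
        apply mul_le_mul_of_nonneg_left h3 (div_nonneg (by linarith) (by linarith))
      have h5 : (r/(r-1)) * (1-1/r) = 1 := by
        have hx : r * (1 - 1/r) = r - 1 := by field_simp
        rw [div_mul_eq_mul_div, hx, div_self (by linarith)]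
      calc ((m:ℝ)+1) ^ (-(1/r)) = (r/(r-1)) * (1-1/r) * ((m:ℝ)+1)^(-(1/r)) := by rw [h5]; ring
        _ = (r/(r-1)) * ((1-1/r) * ((m:ℝ)+1)^(-(1/r))) := by ring
        _ ≤ _ := h4
    push_cast
    linarith [ih]

/-- telescoping bound -/

lemma stmt6_telescope {r : ℝ} (hr1 : 1 < r) {j m : ℕ} (hj : 1 ≤ j) (hjm : j ≤ m) :
    ((m:ℝ) + 1) ^ (1/r) ≤ (j:ℝ) ^ (1/r) + 1/r
      + ∑ i ∈ Finset.Ioc j m, (1/r) * (i:ℝ) ^ (1/r - 1) := by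
  have hr0 : (0:ℝ) < r := by linarith
  have hs0 : (0:ℝ) < 1/r := by positivity
  have hs1 : (1:ℝ)/r ≤ 1 := by
    rw [div_le_one hr0]; linarith
  induction m, hjm using Nat.le_induction with
  | base =>
    simp only [Finset.Ioc_self, Finset.sum_empty, add_zero]
    have hb : (0:ℝ) < (j:ℝ) := by exact_mod_cast hj
    have := stmt6_baux hs0.le hs1 hb (by linarith : -(j:ℝ) ≤ (1:ℝ))
    have hle : (j:ℝ) ^ (1/r - 1) ≤ 1 :=
      Real.rpow_le_one_of_one_le_of_nonpos (by exact_mod_cast hj) (by linarith)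
    have : ((j:ℝ)+1)^(1/r) ≤ (j:ℝ)^(1/r) + (1/r) * (j:ℝ)^(1/r-1) := by linarith
    have h2 : (1/r) * (j:ℝ)^(1/r-1) ≤ 1/r := by
      nlinarith
    linarith
  | succ m hm ih =>
    rw [Finset.sum_Ioc_succ_top hm]
    have hb : (0:ℝ) < (m:ℝ) + 1 := by positivity
    have := stmt6_baux hs0.le hs1 hb (by linarith : -((m:ℝ)+1) ≤ (1:ℝ))
    push_cast
    push_cast at ih
    linarith

lemma stmt6_pointwise {r : ℝ} (hr1 : 1 < r) {j : ℕ} (hj : 1 ≤ j) {y : ℝ} (hy : 0 ≤ y) :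
    ENNReal.ofReal (max (y - (j:ℝ)^(1/r)) 0) ≤
      ENNReal.ofReal (1/r) * (if (j:ℝ)^(1/r) ≤ y then 1 else 0)
      + ∑' i : ℕ, (if j < i ∧ (i:ℝ)^(1/r) ≤ y then ENNReal.ofReal ((1/r) * (i:ℝ)^(1/r-1)) else 0) := by
  have hr0 : (0:ℝ) < r := by linarith
  by_cases hya : (j:ℝ)^(1/r) ≤ y
  · simp only [if_pos hya, mul_one]
    set m := ⌊y^r⌋₊ with hmdef
    have hjr : ((j:ℝ)^(1/r))^r = (j:ℝ) := by
      rw [← Real.rpow_mul (Nat.cast_nonneg j), one_div, inv_mul_cancel₀ (ne_of_gt hr0),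
        Real.rpow_one]
    have hjy : (j:ℝ) ≤ y ^ r := by
      have h1 : ((j:ℝ)^(1/r))^r ≤ y^r :=
        Real.rpow_le_rpow (Real.rpow_nonneg (Nat.cast_nonneg j) _) hya hr0.le
      rwa [hjr] at h1
    have hjm : j ≤ m := Nat.le_floor hjy
    have hym : y ≤ ((m:ℝ) + 1) ^ (1/r) := by
      have h1 : y ^ r < (m:ℝ) + 1 := Nat.lt_floor_add_one _
      have h2 : (y^r)^(1/r) ≤ ((m:ℝ)+1)^(1/r) :=
        Real.rpow_le_rpow (Real.rpow_nonneg hy _) h1.le (by positivity)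
      rwa [← Real.rpow_mul hy, mul_one_div, div_self (ne_of_gt hr0), Real.rpow_one] at h2
    have hreal : y - (j:ℝ)^(1/r) ≤ 1/r + ∑ i ∈ Finset.Ioc j m, (1/r) * (i:ℝ)^(1/r-1) := by
      have := stmt6_telescope hr1 hj hjm
      linarith
    have hmax : max (y - (j:ℝ)^(1/r)) 0 = y - (j:ℝ)^(1/r) :=
      max_eq_left (by linarith)
    rw [hmax]
    have hterm : ∀ i ∈ Finset.Ioc j m, (0:ℝ) ≤ (1/r) * (i:ℝ)^(1/r-1) := by
      intro i _; positivity
    calc ENNReal.ofReal (y - (j:ℝ)^(1/r))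
        ≤ ENNReal.ofReal (1/r + ∑ i ∈ Finset.Ioc j m, (1/r) * (i:ℝ)^(1/r-1)) :=
          ENNReal.ofReal_le_ofReal hreal
      _ = ENNReal.ofReal (1/r) + ENNReal.ofReal (∑ i ∈ Finset.Ioc j m, (1/r) * (i:ℝ)^(1/r-1)) :=
          ENNReal.ofReal_add (by positivity) (Finset.sum_nonneg hterm)
      _ = ENNReal.ofReal (1/r) + ∑ i ∈ Finset.Ioc j m, ENNReal.ofReal ((1/r) * (i:ℝ)^(1/r-1)) :=
          by rw [ENNReal.ofReal_sum_of_nonneg hterm]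
      _ ≤ _ := by
          apply add_le_add_right
          have heq : ∀ i ∈ Finset.Ioc j m,
              ENNReal.ofReal ((1/r) * (i:ℝ)^(1/r-1))
              = (if j < i ∧ (i:ℝ)^(1/r) ≤ y then ENNReal.ofReal ((1/r) * (i:ℝ)^(1/r-1)) else 0) := by
            intro i hi
            rw [Finset.mem_Ioc] at hi
            have hiy : (i:ℝ)^(1/r) ≤ y := by
              have h1 : (i:ℝ) ≤ y^r := le_trans (by exact_mod_cast hi.2) (Nat.floor_le (by positivity))
              have h2 : ((i:ℝ))^(1/r) ≤ (y^r)^(1/r) :=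
                Real.rpow_le_rpow (Nat.cast_nonneg i) h1 (by positivity)
              rwa [← Real.rpow_mul hy, mul_one_div, div_self (ne_of_gt hr0), Real.rpow_one] at h2
            rw [if_pos ⟨hi.1, hiy⟩]
          rw [Finset.sum_congr rfl heq]
          exact Summable.sum_le_tsum _ (fun _ _ => zero_le) ENNReal.summable
  · have hmax : max (y - (j:ℝ)^(1/r)) 0 = 0 := max_eq_right (by linarith [lt_of_not_ge hya])
    rw [hmax]
    simp

lemma stmt6_Vsum {V : ℝ → ℝ} (hVa : ∀ s t : ℝ, 0 < s → s ≤ t → V t ≤ V s)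
    (hV0 : ∀ t, 0 ≤ V t) (hVint : IntegrableOn V (Set.Ioi 0)) (F : Finset ℕ) :
    (∑ i ∈ F, (if 1 ≤ i then V i else 0)) ≤ ∫ t in Set.Ioi (0:ℝ), V t := by
  set N := F.sup id with hN
  have hIoc : ∀ N : ℕ, ∑ i ∈ Finset.Icc 1 N, V i ≤ ∫ t in Set.Ioc (0:ℝ) N, V t := by
    intro N
    induction N with
    | zero => simp [Real.volume_Ioc]
    | succ N ih =>
      have hsub : Set.Ioc ((N:ℝ)) ((N:ℝ)+1) ⊆ Set.Ioi 0 := by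
        intro t ht
        have : (0:ℝ) ≤ N := Nat.cast_nonneg N
        exact lt_of_le_of_lt this ht.1
      have hVI : IntegrableOn V (Set.Ioc ((N:ℝ)) ((N:ℝ)+1)) := hVint.mono_set hsub
      have hstep : V ((N:ℕ)+1 : ℕ) ≤ ∫ t in Set.Ioc ((N:ℝ)) ((N:ℝ)+1), V t := by
        have hconst : ∫ _ in Set.Ioc ((N:ℝ)) ((N:ℝ)+1), V (((N:ℕ)+1 : ℕ):ℝ)
            = V (((N:ℕ)+1 : ℕ):ℝ) := by
          rw [setIntegral_const, Real.volume_real_Ioc]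
          norm_num
        rw [← hconst]
        apply setIntegral_mono_on (integrableOn_const (by
          rw [Real.volume_Ioc]; exact ENNReal.ofReal_ne_top)) hVI measurableSet_Ioc
        intro t ht
        apply hVa t _ (hsub ht) (by push_cast; exact ht.2)
      have hunion : ∫ t in Set.Ioc (0:ℝ) ((N:ℝ)+1), V t
          = (∫ t in Set.Ioc (0:ℝ) N, V t) + ∫ t in Set.Ioc ((N:ℝ)) ((N:ℝ)+1), V t := by
        rw [← setIntegral_union (Set.Ioc_disjoint_Ioc_of_le le_rfl) measurableSet_Ioc
          (hVint.mono_set (Set.Ioc_subset_Ioi_self)) hVI,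
          Set.Ioc_union_Ioc_eq_Ioc (Nat.cast_nonneg N) (by linarith)]
      rw [Finset.sum_Icc_succ_top (Nat.one_le_iff_ne_zero.mpr (Nat.succ_ne_zero N))]
      push_cast
      push_cast at hunion hstep ih ⊢
      linarith
  have h1 : (∑ i ∈ F, (if 1 ≤ i then V i else 0)) ≤ ∑ i ∈ Finset.Icc 1 N, V i := by
    rw [Finset.sum_ite, Finset.sum_const_zero, add_zero]
    apply Finset.sum_le_sum_of_subset_of_nonneg
    · intro i hi
      rw [Finset.mem_filter] at hi
      rw [Finset.mem_Icc]
      exact ⟨hi.2, Finset.le_sup (f := id) hi.1⟩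
    · intro i _ _; exact hV0 _
  refine le_trans h1 (le_trans (hIoc N) ?_)
  apply setIntegral_mono_set hVint
  · exact Filter.Eventually.of_forall (fun t => hV0 t)
  · exact HasSubset.Subset.eventuallyLE Set.Ioc_subset_Ioi_self

lemma stmt6_arith {r C I : ℝ} (hr1 : 1 < r) (hr0 : (0:ℝ) < r) (hC : 0 < C) (hI : 0 ≤ I)
    (V : ℝ → ℝ) (hV0 : ∀ t, 0 ≤ V t)
    (hVs : ∑' i : ℕ, (if 1 ≤ i then ENNReal.ofReal (V i) else 0) ≤ ENNReal.ofReal I)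
    (B : ℕ → ℝ≥0∞)
    (hB : ∀ j : ℕ, B j = ENNReal.ofReal (1/r) * ENNReal.ofReal (C * V j)
      + ∑' i : ℕ, (if j < i then
          ENNReal.ofReal ((1/r) * (i:ℝ)^(1/r-1)) * ENNReal.ofReal (C * V i) else 0)) :
    ∑' j : ℕ, (if 1 ≤ j then ENNReal.ofReal ((j:ℝ)^(-(1/r))) * B j else 0)
      ≤ ENNReal.ofReal ((2*C/(r-1)) * I) := by
  have hrr : (0:ℝ) < r - 1 := by linarith
  set u : ℕ → ℝ≥0∞ := fun j => if 1 ≤ j then ENNReal.ofReal (C/r) * ENNReal.ofReal (V j) else 0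
    with hudef
  set w : ℕ → ℝ≥0∞ := fun j => ∑' i : ℕ, (if 1 ≤ j ∧ j < i then
      ENNReal.ofReal ((j:ℝ)^(-(1/r))) * (ENNReal.ofReal ((1/r) * (i:ℝ)^(1/r-1))
        * ENNReal.ofReal (C * V i)) else 0) with hwdef
  have htuw : ∀ j : ℕ, (if 1 ≤ j then ENNReal.ofReal ((j:ℝ)^(-(1/r))) * B j else 0)
      ≤ u j + w j := by
    intro j
    by_cases hj : 1 ≤ j
    · rw [if_pos hj, hB j, mul_add]
      apply add_le_add
      · rw [hudef]
        simp only [if_pos hj]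
        have h1 : ENNReal.ofReal ((j:ℝ)^(-(1/r))) ≤ 1 := by
          rw [ENNReal.ofReal_le_one]
          exact Real.rpow_le_one_of_one_le_of_nonpos (by exact_mod_cast hj)
            (neg_nonpos.mpr (by positivity))
        calc ENNReal.ofReal ((j:ℝ)^(-(1/r)))
              * (ENNReal.ofReal (1/r) * ENNReal.ofReal (C * V j))
            ≤ 1 * (ENNReal.ofReal (1/r) * ENNReal.ofReal (C * V j)) := by
              exact mul_le_mul_left h1 _
          _ = ENNReal.ofReal (1/r) * ENNReal.ofReal (C * V j) := one_mul _
          _ = ENNReal.ofReal (C/r) * ENNReal.ofReal (V j) := by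
              rw [← ENNReal.ofReal_mul (by positivity), ← ENNReal.ofReal_mul (by positivity)]
              ring_nf
      · rw [hwdef, ← ENNReal.tsum_mul_left]
        apply le_of_eq
        congr 1
        ext i
        rw [mul_ite, mul_zero]
        by_cases hji : j < i
        · rw [if_pos hji, if_pos ⟨hj, hji⟩]
        · rw [if_neg hji, if_neg (fun h => hji h.2)]
    · rw [if_neg hj]
      exact zero_le
  calc ∑' j : ℕ, (if 1 ≤ j then ENNReal.ofReal ((j:ℝ)^(-(1/r))) * B j else 0)
      ≤ ∑' j : ℕ, (u j + w j) := Summable.tsum_le_tsum htuw ENNReal.summable ENNReal.summable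
    _ = (∑' j, u j) + ∑' j, w j := ENNReal.tsum_add
    _ ≤ ENNReal.ofReal (C/r) * ENNReal.ofReal I
        + ENNReal.ofReal (C/(r-1)) * ENNReal.ofReal I := by
        apply add_le_add
        · have hu : ∀ j : ℕ, u j = ENNReal.ofReal (C/r)
              * (if 1 ≤ j then ENNReal.ofReal (V j) else 0) := by
            intro j; rw [hudef, mul_ite, mul_zero]
          rw [tsum_congr hu, ENNReal.tsum_mul_left]
          exact mul_le_mul_right hVs _
        · rw [hwdef, ENNReal.tsum_comm]
          have hiterm : ∀ i : ℕ, (∑' j : ℕ, (if 1 ≤ j ∧ j < i then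
              ENNReal.ofReal ((j:ℝ)^(-(1/r))) * (ENNReal.ofReal ((1/r) * (i:ℝ)^(1/r-1))
                * ENNReal.ofReal (C * V i)) else 0))
              ≤ (if 1 ≤ i then ENNReal.ofReal (C/(r-1)) * ENNReal.ofReal (V i) else 0) := by
            intro i
            by_cases hi : 1 ≤ i
            · rw [if_pos hi]
              have hfac : (∑' j : ℕ, (if 1 ≤ j ∧ j < i then
                  ENNReal.ofReal ((j:ℝ)^(-(1/r))) * (ENNReal.ofReal ((1/r) * (i:ℝ)^(1/r-1))
                    * ENNReal.ofReal (C * V i)) else 0))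
                  = (∑' j : ℕ, (if 1 ≤ j ∧ j < i then ENNReal.ofReal ((j:ℝ)^(-(1/r))) else 0))
                    * (ENNReal.ofReal ((1/r) * (i:ℝ)^(1/r-1)) * ENNReal.ofReal (C * V i)) := by
                rw [← ENNReal.tsum_mul_right]
                congr 1; ext j; rw [ite_mul, zero_mul]
              rw [hfac]
              have hinner : (∑' j : ℕ, (if 1 ≤ j ∧ j < i then
                  ENNReal.ofReal ((j:ℝ)^(-(1/r))) else 0))
                  ≤ ENNReal.ofReal ((r/(r-1)) * (i:ℝ)^(1-1/r)) := by
                apply Summable.tsum_le_of_sum_le ENNReal.summable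
                intro F
                calc ∑ j ∈ F, (if 1 ≤ j ∧ j < i then ENNReal.ofReal ((j:ℝ)^(-(1/r))) else 0)
                    = ∑ j ∈ F.filter (fun j => 1 ≤ j ∧ j < i),
                        ENNReal.ofReal ((j:ℝ)^(-(1/r))) := by
                      rw [Finset.sum_filter]
                  _ ≤ ∑ j ∈ Finset.Icc 1 (i-1), ENNReal.ofReal ((j:ℝ)^(-(1/r))) := by
                      apply Finset.sum_le_sum_of_subset
                      intro j hjmem
                      rw [Finset.mem_filter] at hjmem
                      rw [Finset.mem_Icc]
                      omega
                  _ = ENNReal.ofReal (∑ j ∈ Finset.Icc 1 (i-1), (j:ℝ)^(-(1/r))) := by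
                      rw [ENNReal.ofReal_sum_of_nonneg]
                      intro j _
                      positivity
                  _ ≤ ENNReal.ofReal ((r/(r-1)) * (i:ℝ)^(1-1/r)) := by
                      apply ENNReal.ofReal_le_ofReal
                      refine le_trans (stmt6_sumbound hr1 (i-1)) ?_
                      apply mul_le_mul_of_nonneg_left _ (by positivity)
                      apply Real.rpow_le_rpow (Nat.cast_nonneg _) (by exact_mod_cast Nat.sub_le i 1)
                      rw [sub_nonneg, div_le_one hr0]; linarith
              calc (∑' j : ℕ, (if 1 ≤ j ∧ j < i then ENNReal.ofReal ((j:ℝ)^(-(1/r))) else 0))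
                    * (ENNReal.ofReal ((1/r) * (i:ℝ)^(1/r-1)) * ENNReal.ofReal (C * V i))
                  ≤ ENNReal.ofReal ((r/(r-1)) * (i:ℝ)^(1-1/r))
                    * (ENNReal.ofReal ((1/r) * (i:ℝ)^(1/r-1)) * ENNReal.ofReal (C * V i)) :=
                    mul_le_mul_left hinner _
                _ = ENNReal.ofReal ((r/(r-1)) * (i:ℝ)^(1-1/r) * ((1/r) * (i:ℝ)^(1/r-1)
                      * (C * V i))) := by
                    rw [← ENNReal.ofReal_mul (by positivity), ← ENNReal.ofReal_mul (by positivity)]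
                _ = ENNReal.ofReal (C/(r-1)) * ENNReal.ofReal (V i) := by
                    rw [← ENNReal.ofReal_mul (by positivity)]
                    congr 1
                    have hipos : (0:ℝ) < (i:ℝ) := by exact_mod_cast hi
                    have hrpow : (i:ℝ)^(1-1/r) * (i:ℝ)^(1/r-1) = 1 := by
                      rw [← Real.rpow_add hipos]
                      norm_num
                    have hre : (r/(r-1)) * (i:ℝ)^(1-1/r) * ((1/r) * (i:ℝ)^(1/r-1) * (C * V i))
                        = ((i:ℝ)^(1-1/r) * (i:ℝ)^(1/r-1)) * ((r/(r-1)) * (1/r) * (C * V i)) := by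
                      ring
                    rw [hre, hrpow, one_mul]
                    field_simp
            · rw [if_neg hi]
              apply le_of_eq
              apply ENNReal.tsum_eq_zero.mpr
              intro j
              rw [if_neg]
              rintro ⟨h1, h2⟩
              omega
          calc (∑' i : ℕ, _) ≤ ∑' i : ℕ, (if 1 ≤ i then
                ENNReal.ofReal (C/(r-1)) * ENNReal.ofReal (V i) else 0) :=
                Summable.tsum_le_tsum hiterm ENNReal.summable ENNReal.summable
            _ = ENNReal.ofReal (C/(r-1)) * ∑' i : ℕ, (if 1 ≤ i then ENNReal.ofReal (V i) else 0) := by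
                rw [← ENNReal.tsum_mul_left]
                congr 1; ext i; rw [mul_ite, mul_zero]
            _ ≤ ENNReal.ofReal (C/(r-1)) * ENNReal.ofReal I := mul_le_mul_right hVs _
    _ = ENNReal.ofReal (C/r * I + C/(r-1) * I) := by
        rw [← ENNReal.ofReal_mul (by positivity), ← ENNReal.ofReal_mul (by positivity),
          ENNReal.ofReal_add (by positivity) (by positivity)]
    _ ≤ ENNReal.ofReal ((2*C/(r-1)) * I) := by
        apply ENNReal.ofReal_le_ofReal
        have h1 : C/r ≤ C/(r-1) := by
          apply div_le_div_of_nonneg_left hC.le hrr (by linarith)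
        have h2 : C/r * I ≤ C/(r-1) * I := mul_le_mul_of_nonneg_right h1 hI
        have h3 : (2*C/(r-1)) * I = C/(r-1) * I + C/(r-1) * I := by ring
        linarith
theorem stmt6 {Ω : Type*} [MeasurableSpace Ω] (𝒫₀ : Set (Measure Ω)) (hne : 𝒫₀.Nonempty)
    (hP : ∀ P ∈ 𝒫₀, IsProbabilityMeasure P)
    (r : ℝ) (hr1 : 1 < r) (hr2 : r < 2)
    (X : Ω → ℝ) (hX : Measurable X) (Xs : ℕ → Ω → ℝ) (hXs : ∀ j, Measurable (Xs j))
    (hCh : IntegrableOn (fun t => ⨆ P ∈ 𝒫₀, (P {ω | t ≤ |X ω|^r}).toReal) (Set.Ioi 0))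
    (C : ℝ) (hC : 0 < C)
    (hdom : ∀ x : ℝ, 0 ≤ x → ∀ j : ℕ, 1 ≤ j →
      (⨆ P ∈ 𝒫₀, (P {ω | x ≤ |Xs j ω|}).toReal) ≤ C * ⨆ P ∈ 𝒫₀, (P {ω | x ≤ |X ω|}).toReal) :
    Summable (fun j : ℕ => if 1 ≤ j then
        (j:ℝ)^(-(1/r)) * ⨆ P ∈ 𝒫₀, ∫ ω, max (|Xs j ω| - (j:ℝ)^(1/r)) 0 ∂P else 0) ∧
    (∑' j : ℕ, if 1 ≤ j then
        (j:ℝ)^(-(1/r)) * ⨆ P ∈ 𝒫₀, ∫ ω, max (|Xs j ω| - (j:ℝ)^(1/r)) 0 ∂P else 0)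
      ≤ (2*C/(r-1)) * ∫ t in Set.Ioi (0:ℝ), ⨆ P ∈ 𝒫₀, (P {ω | t ≤ |X ω|^r}).toReal := by
  have hr0 : (0:ℝ) < r := by linarith
  set V : ℝ → ℝ := fun t => ⨆ P ∈ 𝒫₀, (P {ω | t ≤ |X ω|^r}).toReal with hVdef
  -- basic facts about probability measures in 𝒫₀
  have htoReal_le : ∀ P ∈ 𝒫₀, ∀ A : Set Ω, (P A).toReal ≤ 1 := by
    intro P hPm A
    haveI := hP P hPm
    calc (P A).toReal ≤ (P Set.univ).toReal :=
          ENNReal.toReal_mono (by simp) (measure_mono (Set.subset_univ A))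
      _ = 1 := by simp
  have hPne : ∀ P ∈ 𝒫₀, ∀ A : Set Ω, P A ≠ ⊤ := by
    intro P hPm A
    haveI := hP P hPm
    exact (lt_of_le_of_lt prob_le_one ENNReal.one_lt_top).ne
  have hle_sup : ∀ A : Set Ω, ∀ P ∈ 𝒫₀, (P A).toReal ≤ ⨆ P' ∈ 𝒫₀, (P' A).toReal := by
    intro A P hPm
    have hbdd : BddAbove (Set.range fun P' : Measure Ω => ⨆ _ : P' ∈ 𝒫₀, (P' A).toReal) := by
      refine ⟨1, ?_⟩
      rintro x ⟨P', rfl⟩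
      exact Real.iSup_le (fun h => htoReal_le P' h A) zero_le_one
    have heq : (⨆ _ : P ∈ 𝒫₀, (P A).toReal) = (P A).toReal := ciSup_pos hPm
    rw [← heq]
    exact le_ciSup hbdd P
  have hsup_nonneg : ∀ A : Set Ω, 0 ≤ ⨆ P ∈ 𝒫₀, (P A).toReal := fun A =>
    Real.iSup_nonneg fun P => Real.iSup_nonneg fun _ => ENNReal.toReal_nonneg
  have hV0 : ∀ t, 0 ≤ V t := fun t => hsup_nonneg _
  have hVanti : ∀ s t : ℝ, 0 < s → s ≤ t → V t ≤ V s := by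
    intro s t _ hst
    apply Real.iSup_le _ (hV0 s)
    intro P
    apply Real.iSup_le _ (hV0 s)
    intro hPm
    calc (P {ω | t ≤ |X ω|^r}).toReal
        ≤ (P {ω | s ≤ |X ω|^r}).toReal := by
          apply ENNReal.toReal_mono (hPne P hPm _)
          apply measure_mono
          intro ω hω
          exact le_trans hst hω
      _ ≤ V s := hle_sup _ P hPm
  -- ENNReal domination
  have hdom' : ∀ x : ℝ, 0 ≤ x → ∀ j : ℕ, 1 ≤ j → ∀ P ∈ 𝒫₀,
      P {ω | x ≤ |Xs j ω|} ≤ ENNReal.ofReal (C * V (x^r)) := by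
    intro x hx j hj P hPm
    have hsets : {ω | x ≤ |X ω|} = {ω | x^r ≤ |X ω|^r} := by
      ext ω
      simp only [Set.mem_setOf_eq]
      exact (Real.rpow_le_rpow_iff hx (abs_nonneg _) hr0).symm
    have h1 : (P {ω | x ≤ |Xs j ω|}).toReal ≤ C * V (x^r) := by
      calc (P {ω | x ≤ |Xs j ω|}).toReal
          ≤ ⨆ P' ∈ 𝒫₀, (P' {ω | x ≤ |Xs j ω|}).toReal := hle_sup _ P hPm
        _ ≤ C * ⨆ P' ∈ 𝒫₀, (P' {ω | x ≤ |X ω|}).toReal := hdom x hx j hj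
        _ = C * V (x^r) := by rw [hVdef]; rw [hsets]
    calc P {ω | x ≤ |Xs j ω|}
        = ENNReal.ofReal ((P {ω | x ≤ |Xs j ω|}).toReal) :=
          (ENNReal.ofReal_toReal (hPne P hPm _)).symm
      _ ≤ ENNReal.ofReal (C * V (x^r)) := ENNReal.ofReal_le_ofReal h1
  have hrinv : ∀ i : ℕ, (((i:ℝ))^(1/r))^r = (i:ℝ) := by
    intro i
    rw [← Real.rpow_mul (Nat.cast_nonneg i), one_div, inv_mul_cancel₀ (ne_of_gt hr0),
      Real.rpow_one]
  -- the master ENNReal bound B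
  set B : ℕ → ℝ≥0∞ := fun j => ENNReal.ofReal (1/r) * ENNReal.ofReal (C * V j)
      + ∑' i : ℕ, (if j < i then
          ENNReal.ofReal ((1/r) * (i:ℝ)^(1/r-1)) * ENNReal.ofReal (C * V i) else 0) with hBdef
  have hkey : ∀ j : ℕ, 1 ≤ j → ∀ P ∈ 𝒫₀,
      (∫⁻ ω, ENNReal.ofReal (max (|Xs j ω| - (j:ℝ)^(1/r)) 0) ∂P) ≤ B j := by
    intro j hj P hPm
    have hmeas : ∀ x : ℝ, MeasurableSet {ω | x ≤ |Xs j ω|} :=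
      fun x => measurableSet_le measurable_const (hXs j).abs
    set g : ℕ → Ω → ℝ≥0∞ := fun i ω => if j < i then
        ENNReal.ofReal ((1/r) * (i:ℝ)^(1/r-1))
          * ({ω' | (i:ℝ)^(1/r) ≤ |Xs j ω'|}.indicator (fun _ => (1:ℝ≥0∞)) ω) else 0 with hgdef
    have hgmeas : ∀ i, Measurable (g i) := by
      intro i
      by_cases h : j < i
      · simp only [hgdef, if_pos h]
        exact (measurable_const.indicator (hmeas _)).const_mul _
      · simp only [hgdef, if_neg h]
        exact measurable_const
    have step1 : (∫⁻ ω, ENNReal.ofReal (max (|Xs j ω| - (j:ℝ)^(1/r)) 0) ∂P)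
        ≤ ∫⁻ ω, (ENNReal.ofReal (1/r)
            * ({ω' | (j:ℝ)^(1/r) ≤ |Xs j ω'|}.indicator (fun _ => (1:ℝ≥0∞)) ω)
            + ∑' i, g i ω) ∂P := by
      apply lintegral_mono
      intro ω
      refine le_trans (stmt6_pointwise hr1 hj (abs_nonneg (Xs j ω))) (add_le_add ?_ ?_)
      · apply le_of_eq
        rw [Set.indicator_apply]
        simp only [Set.mem_setOf_eq]
      · apply Summable.tsum_le_tsum _ ENNReal.summable ENNReal.summable
        intro i
        by_cases h1 : j < i
        · by_cases h2 : (i:ℝ)^(1/r) ≤ |Xs j ω|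
          · simp [hgdef, h1, h2, Set.indicator_apply, Set.mem_setOf_eq]
          · simp [hgdef, h1, h2, Set.indicator_apply, Set.mem_setOf_eq]
        · simp [hgdef, h1]
    have step2 : (∫⁻ ω, (ENNReal.ofReal (1/r)
            * ({ω' | (j:ℝ)^(1/r) ≤ |Xs j ω'|}.indicator (fun _ => (1:ℝ≥0∞)) ω)
            + ∑' i, g i ω) ∂P)
        = ENNReal.ofReal (1/r) * P {ω | (j:ℝ)^(1/r) ≤ |Xs j ω|}
          + ∑' i : ℕ, (if j < i then
              ENNReal.ofReal ((1/r) * (i:ℝ)^(1/r-1)) * P {ω | (i:ℝ)^(1/r) ≤ |Xs j ω|} else 0) := by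
      rw [lintegral_add_left ((measurable_const.indicator (hmeas _)).const_mul _)]
      congr 1
      · rw [lintegral_const_mul _ (measurable_const.indicator (hmeas _)),
          lintegral_indicator_const (hmeas _), one_mul]
      · rw [lintegral_tsum (fun i => (hgmeas i).aemeasurable)]
        congr 1
        ext i
        by_cases h : j < i
        · simp only [hgdef, if_pos h]
          rw [lintegral_const_mul _ (measurable_const.indicator (hmeas _)),
            lintegral_indicator_const (hmeas _), one_mul]
        · simp [hgdef, h]
    rw [step2] at step1
    refine le_trans step1 (add_le_add ?_ ?_)
    · apply mul_le_mul_right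
      have := hdom' ((j:ℝ)^(1/r)) (Real.rpow_nonneg (Nat.cast_nonneg j) _) j hj P hPm
      rwa [hrinv j] at this
    · apply Summable.tsum_le_tsum _ ENNReal.summable ENNReal.summable
      intro i
      by_cases h : j < i
      · simp only [if_pos h]
        apply mul_le_mul_right
        have := hdom' ((i:ℝ)^(1/r)) (Real.rpow_nonneg (Nat.cast_nonneg i) _) j hj P hPm
        rwa [hrinv i] at this
      · simp [h]
  -- integrability facts about V
  have hVint : IntegrableOn V (Set.Ioi 0) := hCh
  have hI0 : 0 ≤ ∫ t in Set.Ioi (0:ℝ), V t :=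
    setIntegral_nonneg measurableSet_Ioi (fun t _ => hV0 t)
  have hVs : (∑' i : ℕ, (if 1 ≤ i then ENNReal.ofReal (V i) else 0))
      ≤ ENNReal.ofReal (∫ t in Set.Ioi (0:ℝ), V t) := by
    apply Summable.tsum_le_of_sum_le ENNReal.summable
    intro F
    have hcongr : ∀ i ∈ F, (if 1 ≤ i then ENNReal.ofReal (V i) else 0)
        = ENNReal.ofReal (if 1 ≤ i then V i else 0) := by
      intro i _; split_ifs <;> simp
    rw [Finset.sum_congr rfl hcongr,
      ← ENNReal.ofReal_sum_of_nonneg (fun i _ => by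
        split_ifs
        · exact hV0 _
        · exact le_rfl)]
    exact ENNReal.ofReal_le_ofReal (stmt6_Vsum hVanti hV0 hVint F)
  -- B j is finite
  have hBfin : ∀ j : ℕ, 1 ≤ j → B j ≠ ⊤ := by
    intro j hj
    have hble : B j ≤ ENNReal.ofReal (1/r) * ENNReal.ofReal (C * V j)
        + ENNReal.ofReal C * ENNReal.ofReal (∫ t in Set.Ioi (0:ℝ), V t) := by
      rw [hBdef]
      apply add_le_add_right
      calc (∑' i : ℕ, (if j < i then
            ENNReal.ofReal ((1/r) * (i:ℝ)^(1/r-1)) * ENNReal.ofReal (C * V i) else 0))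
          ≤ ∑' i : ℕ, (if 1 ≤ i then ENNReal.ofReal C * ENNReal.ofReal (V i) else 0) := by
            apply Summable.tsum_le_tsum _ ENNReal.summable ENNReal.summable
            intro i
            by_cases h : j < i
            · rw [if_pos h, if_pos (by omega : 1 ≤ i)]
              have hc1 : ENNReal.ofReal ((1/r) * (i:ℝ)^(1/r-1)) ≤ 1 := by
                rw [ENNReal.ofReal_le_one]
                have hr' : (1:ℝ)/r ≤ 1 := by rw [div_le_one hr0]; linarith
                have h1 : (i:ℝ)^(1/r-1) ≤ 1 :=
                  Real.rpow_le_one_of_one_le_of_nonpos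
                    (by exact_mod_cast (by omega : 1 ≤ i)) (sub_nonpos.mpr hr')
                have h0 : (0:ℝ) ≤ (i:ℝ)^(1/r-1) := Real.rpow_nonneg (Nat.cast_nonneg i) _
                nlinarith
              calc ENNReal.ofReal ((1/r) * (i:ℝ)^(1/r-1)) * ENNReal.ofReal (C * V i)
                  ≤ 1 * ENNReal.ofReal (C * V i) := mul_le_mul_left hc1 _
                _ = ENNReal.ofReal C * ENNReal.ofReal (V i) := by
                    rw [one_mul, ENNReal.ofReal_mul hC.le]
            · rw [if_neg h]
              exact zero_le
        _ = ENNReal.ofReal C * ∑' i : ℕ, (if 1 ≤ i then ENNReal.ofReal (V i) else 0) := by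
            rw [← ENNReal.tsum_mul_left]
            congr 1; ext i; rw [mul_ite, mul_zero]
        _ ≤ ENNReal.ofReal C * ENNReal.ofReal (∫ t in Set.Ioi (0:ℝ), V t) :=
            mul_le_mul_right hVs _
    exact (lt_of_le_of_lt hble (by finiteness)).ne
  -- real integral bound
  have hint : ∀ j : ℕ, 1 ≤ j → ∀ P ∈ 𝒫₀,
      (∫ ω, max (|Xs j ω| - (j:ℝ)^(1/r)) 0 ∂P) ≤ (B j).toReal := by
    intro j hj P hPm
    by_cases hInt : Integrable (fun ω => max (|Xs j ω| - (j:ℝ)^(1/r)) 0) P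
    · have hnn : 0 ≤ᵐ[P] fun ω => max (|Xs j ω| - (j:ℝ)^(1/r)) 0 :=
        Filter.Eventually.of_forall (fun ω => le_max_right _ _)
      rw [integral_eq_lintegral_of_nonneg_ae hnn hInt.aestronglyMeasurable]
      exact ENNReal.toReal_mono (hBfin j hj) (hkey j hj P hPm)
    · rw [integral_undef hInt]
      exact ENNReal.toReal_nonneg
  have hsupj : ∀ j : ℕ, 1 ≤ j →
      (⨆ P ∈ 𝒫₀, ∫ ω, max (|Xs j ω| - (j:ℝ)^(1/r)) 0 ∂P) ≤ (B j).toReal := by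
    intro j hj
    apply Real.iSup_le _ ENNReal.toReal_nonneg
    intro P
    exact Real.iSup_le (fun hPm => hint j hj P hPm) ENNReal.toReal_nonneg
  have hsup0 : ∀ j : ℕ,
      0 ≤ ⨆ P ∈ 𝒫₀, ∫ ω, max (|Xs j ω| - (j:ℝ)^(1/r)) 0 ∂P := by
    intro j
    exact Real.iSup_nonneg fun P => Real.iSup_nonneg fun _ =>
      integral_nonneg (fun ω => le_max_right _ _)
  -- the ENNReal series
  have hT : (∑' j : ℕ, (if 1 ≤ j then ENNReal.ofReal ((j:ℝ)^(-(1/r))) * B j else 0))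
      ≤ ENNReal.ofReal ((2*C/(r-1)) * ∫ t in Set.Ioi (0:ℝ), V t) :=
    stmt6_arith hr1 hr0 hC hI0 V hV0 hVs B (fun j => by rw [hBdef])
  have hTne : (∑' j : ℕ, (if 1 ≤ j then ENNReal.ofReal ((j:ℝ)^(-(1/r))) * B j else 0)) ≠ ⊤ :=
    (lt_of_le_of_lt hT ENNReal.ofReal_lt_top).ne
  have hsum' : Summable (fun j : ℕ =>
      ((if 1 ≤ j then ENNReal.ofReal ((j:ℝ)^(-(1/r))) * B j else 0)).toReal) :=
    ENNReal.summable_toReal hTne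
  have hg0 : ∀ j : ℕ, 0 ≤ (if 1 ≤ j then
      (j:ℝ)^(-(1/r)) * ⨆ P ∈ 𝒫₀, ∫ ω, max (|Xs j ω| - (j:ℝ)^(1/r)) 0 ∂P else 0) := by
    intro j
    split_ifs with h
    · exact mul_nonneg (by positivity) (hsup0 j)
    · exact le_rfl
  have hgle : ∀ j : ℕ, (if 1 ≤ j then
      (j:ℝ)^(-(1/r)) * ⨆ P ∈ 𝒫₀, ∫ ω, max (|Xs j ω| - (j:ℝ)^(1/r)) 0 ∂P else 0)
      ≤ ((if 1 ≤ j then ENNReal.ofReal ((j:ℝ)^(-(1/r))) * B j else 0)).toReal := by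
    intro j
    split_ifs with h
    · rw [ENNReal.toReal_mul, ENNReal.toReal_ofReal (by positivity)]
      exact mul_le_mul_of_nonneg_left (hsupj j h) (by positivity)
    · exact ENNReal.toReal_nonneg
  have hsum : Summable (fun j : ℕ => if 1 ≤ j then
      (j:ℝ)^(-(1/r)) * ⨆ P ∈ 𝒫₀, ∫ ω, max (|Xs j ω| - (j:ℝ)^(1/r)) 0 ∂P else 0) :=
    Summable.of_nonneg_of_le hg0 hgle hsum'
  refine ⟨hsum, ?_⟩
  calc (∑' j : ℕ, if 1 ≤ j then
        (j:ℝ)^(-(1/r)) * ⨆ P ∈ 𝒫₀, ∫ ω, max (|Xs j ω| - (j:ℝ)^(1/r)) 0 ∂P else 0)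
      ≤ ∑' j : ℕ, ((if 1 ≤ j then ENNReal.ofReal ((j:ℝ)^(-(1/r))) * B j else 0)).toReal :=
        Summable.tsum_le_tsum hgle hsum hsum'
    _ = ((∑' j : ℕ, (if 1 ≤ j then ENNReal.ofReal ((j:ℝ)^(-(1/r))) * B j else 0))).toReal :=
        (ENNReal.tsum_toReal_eq (fun j => ne_top_of_le_ne_top hTne (ENNReal.le_tsum j))).symm
    _ ≤ (2*C/(r-1)) * ∫ t in Set.Ioi (0:ℝ), V t := by
        apply ENNReal.toReal_le_of_le_ofReal (mul_nonneg (div_nonneg (by linarith) (by linarith)) hI0) hT
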